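/- Let H be a real Hilbert space compactly embedded into L²(Ω), G ⊂ H a closed subspace, ρ̃ ∈ L^∞(Ω), and λ⁻¹ < 0 a negative real number. Assume that for all u ∈ G with ‖u‖_H = 1 we have λ⁻¹ < ∫_Ω ρ̃ u² dx. Then the strict inequality persists at the infimum: λ⁻¹ < inf{∫_Ω ρ̃ u² dx : u ∈ G, ‖u‖_H = 1}. -/

import Mathlib

set_option maxHeartbeats 1000000
set_option synthInstance.maxHeartbeats 200000


open MeasureTheory

section Aux

/-- A map into a normed space whose image lies in a compact set and which is continuous
with respect to the weak topology (tested against all continuous functionals) is continuous. -/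
theorem aux_continuous_of_weak {X E : Type*} [TopologicalSpace X] [NormedAddCommGroup E]
    [NormedSpace ℝ E] {f : X → E} {K : Set E} (hK : IsCompact K)
    (hfK : ∀ x, f x ∈ K)
    (hw : ∀ ψ : StrongDual ℝ E, Continuous fun x => ψ (f x)) : Continuous f := by
  haveI : CompactSpace K := isCompact_iff_compactSpace.mp hK
  set g : K → (StrongDual ℝ E → ℝ) := fun k ψ => ψ (k : E) with hg
  have hgc : Continuous g := continuous_pi fun ψ => ψ.continuous.comp continuous_subtype_val
  have hginj : Function.Injective g := by
    intro a b hab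
    have h0 : (a : E) - (b : E) = 0 := by
      apply NormedSpace.eq_zero_of_forall_dual_eq_zero ℝ
      intro ψ
      have := congrFun hab ψ
      simp only [hg] at this
      simp [map_sub, this]
    exact Subtype.ext (sub_eq_zero.mp h0)
  have hembed := hgc.isClosedEmbedding hginj
  have hf' : Continuous (fun x => (⟨f x, hfK x⟩ : K)) := by
    rw [hembed.isEmbedding.isInducing.continuous_iff]
    exact continuous_pi fun ψ => hw ψ
  exact continuous_subtype_val.comp hf'

variable {α : Type*} [MeasurableSpace α] {μ : Measure α}

theorem aux_integrable (ρ : α → ℝ) (M : ℝ) (hmeas : Measurable ρ)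
    (hbd : ∀ᵐ x ∂μ, |ρ x| ≤ M) (f g : Lp ℝ 2 μ) :
    Integrable (fun x => ρ x * (f x * g x)) μ := by
  have h : Integrable (fun x => f x * g x) μ := by
    have := L2.integrable_inner (𝕜 := ℝ) f g
    simpa [RCLike.inner_apply, conj_trivial, mul_comm] using this
  exact h.bdd_mul hmeas.aestronglyMeasurable
    (by filter_upwards [hbd] with x hx using by simpa using hx)

theorem aux_bound (ρ : α → ℝ) (M : ℝ) (hM : 0 ≤ M) (hmeas : Measurable ρ)
    (hbd : ∀ᵐ x ∂μ, |ρ x| ≤ M) (f g : Lp ℝ 2 μ) :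
    |∫ x, ρ x * (f x * g x) ∂μ| ≤ M * (‖f‖ * ‖g‖) := by
  have habs : Integrable (fun x => |f x| * |g x|) μ := by
    have := L2.integrable_inner (𝕜 := ℝ) |f| |g|
    have h' : Integrable (fun x => (|f| : Lp ℝ 2 μ) x * (|g| : Lp ℝ 2 μ) x) μ := by
      simpa [RCLike.inner_apply, conj_trivial, mul_comm] using this
    exact h'.congr (by filter_upwards [Lp.coeFn_abs f, Lp.coeFn_abs g] with x hf hg; rw [hf, hg])
  have h1 : |∫ x, ρ x * (f x * g x) ∂μ| ≤ ∫ x, M * (|f x| * |g x|) ∂μ := by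
    have habs0 : |∫ x, ρ x * (f x * g x) ∂μ| ≤ ∫ x, |ρ x * (f x * g x)| ∂μ := by
      simpa only [Real.norm_eq_abs] using norm_integral_le_integral_norm (μ := μ) (fun x => ρ x * (f x * g x))
    refine habs0.trans ?_
    refine integral_mono_of_nonneg (Filter.Eventually.of_forall fun x => abs_nonneg _)
      (habs.const_mul M) ?_
    filter_upwards [hbd] with x hx
    calc |ρ x * (f x * g x)| = |ρ x| * (|f x| * |g x|) := by rw [abs_mul, abs_mul]
    _ ≤ M * (|f x| * |g x|) := by
        exact mul_le_mul_of_nonneg_right hx (by positivity)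
  have h2 : ∫ x, |f x| * |g x| ∂μ ≤ ‖f‖ * ‖g‖ := by
    have hcs := real_inner_le_norm (|f| : Lp ℝ 2 μ) (|g| : Lp ℝ 2 μ)
    rw [L2.inner_def] at hcs
    have heq : ∫ x, (inner ℝ ((|f| : Lp ℝ 2 μ) x) ((|g| : Lp ℝ 2 μ) x) : ℝ) ∂μ
        = ∫ x, |f x| * |g x| ∂μ := by
      refine integral_congr_ae ?_
      filter_upwards [Lp.coeFn_abs f, Lp.coeFn_abs g] with x hf hg
      simp [hf, hg, RCLike.inner_apply, conj_trivial, mul_comm]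
    rw [heq, norm_abs_eq_norm, norm_abs_eq_norm] at hcs
    exact hcs
  calc |∫ x, ρ x * (f x * g x) ∂μ| ≤ ∫ x, M * (|f x| * |g x|) ∂μ := h1
  _ = M * ∫ x, |f x| * |g x| ∂μ := by rw [integral_const_mul]
  _ ≤ M * (‖f‖ * ‖g‖) := mul_le_mul_of_nonneg_left h2 hM

theorem aux_qcont (ρ : α → ℝ) (M : ℝ) (hM : 0 ≤ M) (hmeas : Measurable ρ)
    (hbd : ∀ᵐ x ∂μ, |ρ x| ≤ M) :
    Continuous fun w : Lp ℝ 2 μ => ∫ x, ρ x * (w x) ^ 2 ∂μ := by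
  have key : ∀ w v : Lp ℝ 2 μ,
      |(∫ x, ρ x * (w x) ^ 2 ∂μ) - ∫ x, ρ x * (v x) ^ 2 ∂μ| ≤ M * (‖w - v‖ * ‖w + v‖) := by
    intro w v
    have hIw : Integrable (fun x => ρ x * (w x) ^ 2) μ := by
      have := aux_integrable ρ M hmeas hbd w w
      exact this.congr (Filter.Eventually.of_forall fun x => by ring_nf)
    have hIv : Integrable (fun x => ρ x * (v x) ^ 2) μ := by
      have := aux_integrable ρ M hmeas hbd v v
      exact this.congr (Filter.Eventually.of_forall fun x => by ring_nf)
    have hdiff : (∫ x, ρ x * (w x) ^ 2 ∂μ) - (∫ x, ρ x * (v x) ^ 2 ∂μ)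
        = ∫ x, ρ x * ((w - v) x * ((w + v) x)) ∂μ := by
      rw [← integral_sub hIw hIv]
      refine integral_congr_ae ?_
      filter_upwards [Lp.coeFn_sub w v, Lp.coeFn_add w v] with x h1 h2
      rw [h1, h2]
      simp only [Pi.sub_apply, Pi.add_apply]
      ring
    rw [hdiff]
    exact aux_bound ρ M hM hmeas hbd (w - v) (w + v)
  refine continuous_iff_continuousAt.mpr fun v => ?_
  have goal : Filter.Tendsto (fun w : Lp ℝ 2 μ => dist (∫ x, ρ x * (w x) ^ 2 ∂μ)
      (∫ x, ρ x * (v x) ^ 2 ∂μ)) (nhds v) (nhds 0) → ContinuousAt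
      (fun w : Lp ℝ 2 μ => ∫ x, ρ x * (w x) ^ 2 ∂μ) v :=
    fun h => tendsto_iff_dist_tendsto_zero.mpr h
  apply goal
  have hb : Filter.Tendsto (fun w : Lp ℝ 2 μ => M * (‖w - v‖ * ‖w + v‖)) (nhds v)
      (nhds (M * (‖v - v‖ * ‖v + v‖))) := by
    refine Filter.Tendsto.const_mul M (Filter.Tendsto.mul ?_ ?_)
    · exact ((continuous_id.sub continuous_const).norm).tendsto v
    · exact ((continuous_id.add continuous_const).norm).tendsto v
  have hb0 : Filter.Tendsto (fun w : Lp ℝ 2 μ => M * (‖w - v‖ * ‖w + v‖)) (nhds v) (nhds 0) := by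
    simpa using hb
  refine squeeze_zero (fun w => dist_nonneg) (fun w => ?_) hb0
  rw [Real.dist_eq]
  exact key w v

theorem aux_qsmul (ρ : α → ℝ) (c : ℝ) (w : Lp ℝ 2 μ) :
    (∫ x, ρ x * ((c • w) x) ^ 2 ∂μ) = c ^ 2 * ∫ x, ρ x * (w x) ^ 2 ∂μ := by
  rw [← integral_const_mul]
  refine integral_congr_ae ?_
  filter_upwards [Lp.coeFn_smul c w] with x hx
  rw [hx]
  simp only [Pi.smul_apply, smul_eq_mul]
  ring

end Aux

/-- for a compact embedding `ι : H → L²(Ω)`, a closed subspace `G`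
and `λ⁻¹ < 0`, if `λ⁻¹ < ∫ ρ̃ u²` for every unit `u ∈ G`, then the strict
inequality persists at the infimum. -/
theorem stmt11 {N : ℕ} (Ω : Set (EuclideanSpace ℝ (Fin N)))
    (hΩmeas : MeasurableSet Ω) (hΩ : Bornology.IsBounded Ω)
    (H : Type*) [NormedAddCommGroup H] [InnerProductSpace ℝ H] [CompleteSpace H]
    (ι : H →L[ℝ] Lp ℝ 2 (volume.restrict Ω))
    (hι : IsCompactOperator ι)
    (ρt : EuclideanSpace ℝ (Fin N) → ℝ) (Mb : ℝ)
    (hρtmeas : Measurable ρt)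
    (hρt : ∀ᵐ x ∂(volume.restrict Ω), |ρt x| ≤ Mb)
    (G : Submodule ℝ H) (hG : IsClosed (G : Set H))
    (hGne : ∃ u ∈ G, u ≠ 0)
    (laminv : ℝ) (hneg : laminv < 0)
    (hgt : ∀ u : H, u ∈ G → ‖u‖ = 1 →
      laminv < ∫ x, ρt x * (ι u x) ^ 2 ∂(volume.restrict Ω)) :
    laminv < sInf {y : ℝ | ∃ u ∈ G, ‖u‖ = 1 ∧
      (∫ x, ρt x * (ι u x) ^ 2 ∂(volume.restrict Ω)) = y} := by
  classical
  set M : ℝ := max Mb 0 with hMdef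
  have hM : 0 ≤ M := le_max_right _ _
  have hbd : ∀ᵐ x ∂(volume.restrict Ω), |ρt x| ≤ M := by
    filter_upwards [hρt] with x hx using hx.trans (le_max_left _ _)
  set Q : Lp ℝ 2 (volume.restrict Ω) → ℝ :=
    fun w => ∫ x, ρt x * (w x) ^ 2 ∂(volume.restrict Ω) with hQ
  have hQcont : Continuous Q := aux_qcont ρt M hM hρtmeas hbd
  haveI : CompleteSpace G := hG.completeSpace_coe
  set T := InnerProductSpace.toDual ℝ H with hT
  -- the weakly compact set A
  set A : Set (WeakDual ℝ H) :=
    (⇑(WeakDual.toStrongDual (𝕜 := ℝ) (E := H)) ⁻¹' Metric.closedBall 0 1)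
      ∩ {φ | ∀ v ∈ Gᗮ, φ v = 0} with hA
  have hAclosed2 : IsClosed {φ : WeakDual ℝ H | ∀ v ∈ Gᗮ, φ v = 0} := by
    have : {φ : WeakDual ℝ H | ∀ v ∈ Gᗮ, φ v = 0}
        = ⋂ v ∈ (Gᗮ : Set H), {φ : WeakDual ℝ H | φ v = 0} := by
      ext φ; simp
    rw [this]
    exact isClosed_biInter fun v _ =>
      isClosed_eq (WeakDual.eval_continuous v) continuous_const
  have hAcomp : IsCompact A :=
    (WeakDual.isCompact_closedBall (𝕜 := ℝ) (E := H) 0 1).inter_right hAclosed2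
  have hAne : A.Nonempty := by
    refine ⟨0, ?_, ?_⟩
    · simp [Metric.mem_closedBall]
    · intro v _; rfl
  -- membership transfers
  have hTA : ∀ u : H, u ∈ G → ‖u‖ ≤ 1 →
      StrongDual.toWeakDual (T u) ∈ A := by
    intro u huG hun
    constructor
    · simp only [Set.mem_preimage, Metric.mem_closedBall, dist_zero_right]
      have h0 : ‖WeakDual.toStrongDual (StrongDual.toWeakDual (T u))‖ = ‖T u‖ := rfl
      rw [h0, T.norm_map]
      exact hun
    · intro v hv
      have h1 : T u v = inner ℝ u v := InnerProductSpace.toDual_apply_apply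
      rw [Submodule.mem_orthogonal] at hv
      show T u v = 0
      rw [h1]
      exact hv u huG
  have hback : ∀ φ ∈ A, T.symm (WeakDual.toStrongDual φ) ∈ G ∧
      ‖T.symm (WeakDual.toStrongDual φ)‖ ≤ 1 := by
    intro φ hφ
    obtain ⟨h1, h2⟩ := hφ
    constructor
    · have hGoo : Gᗮᗮ = G := Submodule.orthogonal_orthogonal G
      rw [← hGoo, Submodule.mem_orthogonal]
      intro v hv
      have h3 : (inner ℝ (T.symm (WeakDual.toStrongDual φ)) v : ℝ)
          = WeakDual.toStrongDual φ v := InnerProductSpace.toDual_symm_apply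
      rw [real_inner_comm, h3]
      exact h2 v hv
    · rw [T.symm.norm_map]
      simpa [Metric.mem_closedBall, dist_zero_right] using h1
  -- the compact set K in L²
  have hι' : IsCompactOperator
      ((ι.toLinearMap : H →ₗ[ℝ] Lp ℝ 2 (volume.restrict Ω)) : H → Lp ℝ 2 (volume.restrict Ω)) :=
    hι
  obtain ⟨K, hKcomp, hKsub⟩ :=
    IsCompactOperator.image_closedBall_subset_compact hι' 1
  -- the evaluation map on A
  set f : WeakDual ℝ H → Lp ℝ 2 (volume.restrict Ω) :=
    fun φ => ι (T.symm (WeakDual.toStrongDual φ)) with hf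
  have hfA : ∀ a : A, f a.1 ∈ K := by
    intro a
    refine hKsub ⟨T.symm (WeakDual.toStrongDual a.1), ?_, rfl⟩
    rw [Metric.mem_closedBall, dist_zero_right]
    exact (hback a.1 a.2).2
  have hwk : ∀ ψ : StrongDual ℝ (Lp ℝ 2 (volume.restrict Ω)),
      Continuous fun a : A => ψ (f a.1) := by
    intro ψ
    have heq : ∀ a : A, ψ (f a.1) = a.1 (T.symm (ψ.comp ι)) := by
      intro a
      have h1 : (inner ℝ (T.symm (ψ.comp ι)) (T.symm (WeakDual.toStrongDual a.1)) : ℝ)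
          = (ψ.comp ι) (T.symm (WeakDual.toStrongDual a.1)) :=
        InnerProductSpace.toDual_symm_apply
      have h2 : (inner ℝ (T.symm (WeakDual.toStrongDual a.1)) (T.symm (ψ.comp ι)) : ℝ)
          = WeakDual.toStrongDual a.1 (T.symm (ψ.comp ι)) :=
        InnerProductSpace.toDual_symm_apply
      calc ψ (f a.1) = (ψ.comp ι) (T.symm (WeakDual.toStrongDual a.1)) := rfl
      _ = (inner ℝ (T.symm (ψ.comp ι)) (T.symm (WeakDual.toStrongDual a.1)) : ℝ) := h1.symm
      _ = (inner ℝ (T.symm (WeakDual.toStrongDual a.1)) (T.symm (ψ.comp ι)) : ℝ) :=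
        real_inner_comm _ _
      _ = WeakDual.toStrongDual a.1 (T.symm (ψ.comp ι)) := h2
      _ = a.1 (T.symm (ψ.comp ι)) := rfl
    simp only [heq]
    exact (WeakDual.eval_continuous (T.symm (ψ.comp ι))).comp continuous_subtype_val
  have hfcont : Continuous fun a : A => f a.1 :=
    aux_continuous_of_weak hKcomp hfA hwk
  have hQfcont : ContinuousOn (fun φ => Q (f φ)) A := by
    rw [continuousOn_iff_continuous_restrict]
    exact hQcont.comp hfcont
  obtain ⟨φ₀, hφ₀A, hφ₀min⟩ := hAcomp.exists_isMinOn hAne hQfcont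
  set u₀ : H := T.symm (WeakDual.toStrongDual φ₀) with hu₀
  obtain ⟨hu₀G, hu₀n⟩ := hback φ₀ hφ₀A
  set m : ℝ := Q (ι u₀) with hm
  have hmin : ∀ u : H, u ∈ G → ‖u‖ ≤ 1 → m ≤ Q (ι u) := by
    intro u huG hun
    have hmem := hTA u huG hun
    have h5 := hφ₀min hmem
    simpa [f, T.symm_apply_apply] using h5
  -- the infimum set
  set S : Set ℝ := {y : ℝ | ∃ u ∈ G, ‖u‖ = 1 ∧
      (∫ x, ρt x * (ι u x) ^ 2 ∂(volume.restrict Ω)) = y} with hS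
  obtain ⟨w₀, hw₀G, hw₀ne⟩ := hGne
  have hSne : S.Nonempty := by
    refine ⟨Q (ι (‖w₀‖⁻¹ • w₀)), ‖w₀‖⁻¹ • w₀, G.smul_mem _ hw₀G,
      norm_smul_inv_norm hw₀ne, rfl⟩
  have hSlb : ∀ y ∈ S, m ≤ y := by
    rintro y ⟨u, huG, hun, rfl⟩
    exact hmin u huG hun.le
  rcases le_or_gt 0 m with hm0 | hm0
  · have h6 : (0 : ℝ) ≤ sInf S := le_csInf hSne fun y hy => hm0.trans (hSlb y hy)
    exact lt_of_lt_of_le hneg h6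
  · have hu₀ne : u₀ ≠ 0 := by
      intro h0
      rw [h0] at hm
      have hz0 : Q (ι (0 : H)) = 0 := by
        have hz : (ι (0 : H)) = (0 : Lp ℝ 2 (volume.restrict Ω)) := by simp
        rw [hQ]
        simp only [hz]
        have hcongr : ∫ x, ρt x * ((0 : Lp ℝ 2 (volume.restrict Ω)) x) ^ 2 ∂(volume.restrict Ω)
            = ∫ _x, (0 : ℝ) ∂(volume.restrict Ω) := by
          refine integral_congr_ae ?_
          filter_upwards [Lp.coeFn_zero ℝ 2 (volume.restrict Ω)] with x hx
          rw [hx]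
          simp
        rw [hcongr, integral_zero]
      rw [hz0] at hm
      rw [hm] at hm0
      exact absurd hm0 (lt_irrefl 0)
    have hc : 0 < ‖u₀‖ := norm_pos_iff.mpr hu₀ne
    have hc1 : ‖u₀‖ ≤ 1 := hu₀n
    have hvG : ‖u₀‖⁻¹ • u₀ ∈ G := G.smul_mem _ hu₀G
    have hvn : ‖(‖u₀‖⁻¹ • u₀)‖ = 1 := norm_smul_inv_norm hu₀ne
    have hQv : Q (ι (‖u₀‖⁻¹ • u₀)) = (‖u₀‖⁻¹) ^ 2 * m := by
      rw [hQ, hm, ι.map_smul]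
      exact aux_qsmul ρt (‖u₀‖⁻¹) (ι u₀)
    have hinv1 : (1 : ℝ) ≤ (‖u₀‖⁻¹) ^ 2 := by
      have h1 : (1 : ℝ) ≤ ‖u₀‖⁻¹ := (one_le_inv₀ hc).mpr hc1
      nlinarith
    have hQvm : Q (ι (‖u₀‖⁻¹ • u₀)) ≤ m := by
      rw [hQv]
      nlinarith
    have hlt : laminv < Q (ι (‖u₀‖⁻¹ • u₀)) := hgt _ hvG hvn
    have h7 : m ≤ sInf S := le_csInf hSne hSlb
    exact lt_of_lt_of_le (lt_of_lt_of_le hlt hQvm) h7
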